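/- Let G be an undirected graph with vertex set V, and let k be a positive integer. There exists a contagious set A ⊆ V (i.e., a set such that iteratively activating every vertex with at least k already-active neighbors eventually activates all of V) with |A| ≤ Σ_{v∈V} min(1, k/(d(v)+1)), where d(v) is the degree of v. -/

import Mathlib

/-- A set `T` is closed under the threshold-`k` activation rule: every vertex with at
least `k` neighbors in `T` belongs to `T`. -/
def ClosedUnder {V : Type*} (G : SimpleGraph V) (k : ℕ) (T : Set V) : Prop :=
  ∀ v : V, k ≤ {u : V | G.Adj v u ∧ u ∈ T}.ncard → v ∈ T

/-- `A` is contagious with threshold `k`: the activation process starting from `A`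
(equivalently, the least `ClosedUnder`-closed superset of `A`) activates every vertex. -/
def Contagious {V : Type*} (G : SimpleGraph V) (k : ℕ) (A : Set V) : Prop :=
  ∀ T : Set V, A ⊆ T → ClosedUnder G k T → ∀ v : V, v ∈ T

/- ## Auxiliary arithmetic lemmas -/

lemma aux_L1 (t d : ℕ) (hd : 1 ≤ d) :
    min 1 (((t - 1 : ℕ) : ℝ) / (((d - 1 : ℕ) : ℝ) + 1)) ≤ min 1 ((t : ℝ) / ((d : ℝ) + 1)) := by
  have hden : ((d - 1 : ℕ) : ℝ) + 1 = (d : ℝ) := by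
    rw [Nat.cast_sub hd]; push_cast; ring
  rw [hden]
  rcases Nat.eq_zero_or_pos t with h0 | ht
  · subst h0
    norm_num
  · have hcast : ((t - 1 : ℕ) : ℝ) = (t : ℝ) - 1 := by
      rw [Nat.cast_sub ht]; push_cast; ring
    by_cases hle : (t : ℝ) ≤ (d : ℝ) + 1
    · refine min_le_min le_rfl ?_
      rw [hcast, div_le_div_iff₀ (by positivity) (by positivity)]
      nlinarith
    · push_neg at hle
      have h1 : (1 : ℝ) ≤ (t : ℝ) / ((d : ℝ) + 1) :=
        (one_le_div (by positivity)).mpr hle.le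
      rw [min_eq_left h1]
      exact min_le_left _ _

lemma aux_L2 (t d : ℕ) (h1 : 1 ≤ t) (h2 : t ≤ d) :
    min 1 ((t : ℝ) / (((d - 1 : ℕ) : ℝ) + 1)) ≤
      min 1 ((t : ℝ) / ((d : ℝ) + 1)) + (t : ℝ) / ((d : ℝ) * ((d : ℝ) + 1)) := by
  have hd : 1 ≤ d := le_trans h1 h2
  have hden : ((d - 1 : ℕ) : ℝ) + 1 = (d : ℝ) := by
    rw [Nat.cast_sub hd]; push_cast; ring
  rw [hden]
  have hdpos : (0 : ℝ) < (d : ℝ) := by exact_mod_cast hd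
  have ht : (t : ℝ) ≤ (d : ℝ) := by exact_mod_cast h2
  have e1 : min 1 ((t : ℝ) / (d : ℝ)) = (t : ℝ) / (d : ℝ) :=
    min_eq_right ((div_le_one hdpos).mpr ht)
  have e2 : min 1 ((t : ℝ) / ((d : ℝ) + 1)) = (t : ℝ) / ((d : ℝ) + 1) :=
    min_eq_right ((div_le_one (by positivity)).mpr (by linarith))
  rw [e1, e2]
  have : (t : ℝ) / (d : ℝ) = (t : ℝ) / ((d : ℝ) + 1) + (t : ℝ) / ((d : ℝ) * ((d : ℝ) + 1)) := by
    field_simp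
  linarith [this.le]

/- ## Double counting lemma -/

lemma aux_swap {V : Type*} [Fintype V] [DecidableEq V] (G : SimpleGraph V)
    [DecidableRel G.Adj] (S : Finset V) (g : V → ℝ) :
    ∑ v ∈ S, ∑ u ∈ S.filter (G.Adj v), g u
      = ∑ u ∈ S, ((S.filter (G.Adj u)).card : ℝ) * g u := by
  simp only [Finset.sum_filter]
  rw [Finset.sum_comm]
  refine Finset.sum_congr rfl fun u _ => ?_
  have : (S.filter fun v => G.Adj v u) = S.filter (G.Adj u) := by
    apply Finset.filter_congr
    intro x _
    simp [G.adj_comm]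
  calc ∑ v ∈ S, (if G.Adj v u then g u else 0)
      = ∑ v ∈ S.filter (fun v => G.Adj v u), g u := (Finset.sum_filter _ _).symm
    _ = (S.filter (G.Adj u)).card • g u := by rw [this, Finset.sum_const]
    _ = ((S.filter (G.Adj u)).card : ℝ) * g u := nsmul_eq_mul _ _

/- ## Main induction -/

lemma aux_main {V : Type*} [Fintype V] [DecidableEq V] (G : SimpleGraph V)
    [DecidableRel G.Adj] :
    ∀ (n : ℕ) (S : Finset V), S.card ≤ n → ∀ t : V → ℕ,
    ∃ A : Finset V,
      (∀ T : Set V, ↑A ⊆ T →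
        (∀ v ∈ S, t v ≤ {u : V | u ∈ S ∧ G.Adj v u ∧ u ∈ T}.ncard → v ∈ T) →
        ∀ v ∈ S, v ∈ T) ∧
      (A.card : ℝ) ≤ ∑ v ∈ S, min 1 ((t v : ℝ) / (((S.filter (G.Adj v)).card : ℝ) + 1)) := by
  intro n
  induction n with
  | zero =>
    intro S hS t
    have hS0 : S = ∅ := Finset.card_eq_zero.mp (Nat.le_zero.mp hS)
    subst hS0
    exact ⟨∅, fun T _ _ v hv => absurd hv (Finset.notMem_empty v), by simp⟩
  | succ n ih =>
    intro S hS t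
    rcases S.eq_empty_or_nonempty with rfl | hne
    · exact ⟨∅, fun T _ _ v hv => absurd hv (Finset.notMem_empty v), by simp⟩
    by_cases hc : ∀ v ∈ S, 1 ≤ t v ∧ t v ≤ (S.filter (G.Adj v)).card
    · -- case (iii): all thresholds are between 1 and the degree; use averaging
      set f : V → ℝ := fun v => (t v : ℝ) / (((S.filter (G.Adj v)).card : ℝ) + 1) with hf
      set g : V → ℝ := fun u => (t u : ℝ) /
          (((S.filter (G.Adj u)).card : ℝ) * (((S.filter (G.Adj u)).card : ℝ) + 1)) with hg
      have hsum : ∑ v ∈ S, ∑ u ∈ S.filter (G.Adj v), g u = ∑ v ∈ S, f v := by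
        rw [aux_swap]
        refine Finset.sum_congr rfl fun u hu => ?_
        have hd1 : 1 ≤ (S.filter (G.Adj u)).card := le_trans (hc u hu).1 (hc u hu).2
        have hdpos : (0:ℝ) < ((S.filter (G.Adj u)).card : ℝ) := by exact_mod_cast hd1
        rw [hg, hf]
        field_simp
      have hex : ∃ v ∈ S, ∑ u ∈ S.filter (G.Adj v), g u ≤ f v := by
        by_contra h
        push_neg at h
        have hlt := Finset.sum_lt_sum_of_nonempty hne h
        rw [hsum] at hlt
        exact lt_irrefl _ hlt
      obtain ⟨v, hvS, hvle⟩ := hex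
      have hcard : (S.erase v).card ≤ n := by
        rw [Finset.card_erase_of_mem hvS]; omega
      obtain ⟨A, hgood, hbound⟩ := ih (S.erase v) hcard t
      refine ⟨A, ?_, ?_⟩
      · intro T hAT hcl
        have hsubT : ∀ u ∈ S.erase v, u ∈ T := by
          refine hgood T hAT ?_
          intro u hu hcnt
          refine hcl u (Finset.mem_of_mem_erase hu) (le_trans hcnt ?_)
          refine Set.ncard_le_ncard ?_ (Set.toFinite _)
          intro x hx
          exact ⟨Finset.mem_of_mem_erase hx.1, hx.2⟩
        intro w hwS
        by_cases hwv : w = v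
        · subst hwv
          refine hcl w hwS ?_
          have hset : {x : V | x ∈ S ∧ G.Adj w x ∧ x ∈ T} = ↑(S.filter (G.Adj w)) := by
            ext x
            simp only [Finset.coe_filter, Set.mem_setOf_eq]
            constructor
            · rintro ⟨h1, h2, _⟩; exact ⟨h1, h2⟩
            · rintro ⟨h1, h2⟩
              exact ⟨h1, h2, hsubT x (Finset.mem_erase.mpr ⟨h2.ne', h1⟩)⟩
          rw [hset, Set.ncard_coe_finset]
          exact (hc w hwS).2
        · exact hsubT w (Finset.mem_erase.mpr ⟨hwv, hwS⟩)
      · refine hbound.trans ?_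
        have hstep : ∀ u ∈ S.erase v,
            min 1 ((t u : ℝ) / ((((S.erase v).filter (G.Adj u)).card : ℝ) + 1))
              ≤ min 1 ((t u : ℝ) / (((S.filter (G.Adj u)).card : ℝ) + 1))
                + (if G.Adj v u then g u else 0) := by
          intro u hu
          have huS := Finset.mem_of_mem_erase hu
          rw [Finset.filter_erase]
          by_cases hadj : G.Adj v u
          · rw [if_pos hadj]
            have hvmem : v ∈ S.filter (G.Adj u) := Finset.mem_filter.mpr ⟨hvS, hadj.symm⟩
            rw [Finset.card_erase_of_mem hvmem]
            exact aux_L2 (t u) _ (hc u huS).1 (hc u huS).2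
          · rw [if_neg hadj, add_zero]
            have hnm : v ∉ S.filter (G.Adj u) :=
              fun hmem => hadj ((Finset.mem_filter.mp hmem).2.symm)
            rw [Finset.erase_eq_of_notMem hnm]
        have hite : ∑ u ∈ S.erase v, (if G.Adj v u then g u else 0)
            = ∑ u ∈ S.filter (G.Adj v), g u := by
          rw [← Finset.sum_filter, Finset.filter_erase,
            Finset.erase_eq_of_notMem (fun h => G.irrefl (Finset.mem_filter.mp h).2)]
        calc ∑ u ∈ S.erase v,
              min 1 ((t u : ℝ) / ((((S.erase v).filter (G.Adj u)).card : ℝ) + 1))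
            ≤ ∑ u ∈ S.erase v, (min 1 ((t u : ℝ) / (((S.filter (G.Adj u)).card : ℝ) + 1))
                + (if G.Adj v u then g u else 0)) := Finset.sum_le_sum hstep
          _ = ∑ u ∈ S.erase v, min 1 ((t u : ℝ) / (((S.filter (G.Adj u)).card : ℝ) + 1))
                + ∑ u ∈ S.filter (G.Adj v), g u := by rw [Finset.sum_add_distrib, hite]
          _ ≤ ∑ u ∈ S.erase v, min 1 ((t u : ℝ) / (((S.filter (G.Adj u)).card : ℝ) + 1))
                + f v := add_le_add_right hvle _
          _ = ∑ u ∈ S, min 1 ((t u : ℝ) / (((S.filter (G.Adj u)).card : ℝ) + 1)) := by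
              have hfv : f v = min 1 ((t v : ℝ) / (((S.filter (G.Adj v)).card : ℝ) + 1)) := by
                rw [hf]
                refine (min_eq_right ?_).symm
                have h2 : (t v : ℝ) ≤ ((S.filter (G.Adj v)).card : ℝ) := by
                  exact_mod_cast (hc v hvS).2
                rw [div_le_one (by positivity)]
                linarith
              rw [hfv]
              exact Finset.sum_erase_add S _ hvS
    · -- cases (i)/(ii): some vertex has threshold 0 or threshold exceeding its degree
      push_neg at hc
      obtain ⟨v, hvS, hv⟩ := hc
      set t' : V → ℕ := fun u => if G.Adj v u then t u - 1 else t u with ht'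
      have hcard : (S.erase v).card ≤ n := by rw [Finset.card_erase_of_mem hvS]; omega
      obtain ⟨A, hgood, hbound⟩ := ih (S.erase v) hcard t'
      have key : ∀ T : Set V, ↑A ⊆ T →
          (∀ w ∈ S, t w ≤ {u : V | u ∈ S ∧ G.Adj w u ∧ u ∈ T}.ncard → w ∈ T) →
          v ∈ T → ∀ w ∈ S, w ∈ T := by
        intro T hAT hcl hvT w hwS
        by_cases hwv : w = v
        · subst hwv; exact hvT
        refine hgood T hAT ?_ w (Finset.mem_erase.mpr ⟨hwv, hwS⟩)
        intro u hu hcnt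
        have huS := Finset.mem_of_mem_erase hu
        rcases Nat.eq_zero_or_pos (t u) with h0 | h1
        · exact hcl u huS (h0 ▸ Nat.zero_le _)
        by_cases hadj : G.Adj v u
        · refine hcl u huS ?_
          have hins : insert v {x : V | x ∈ S.erase v ∧ G.Adj u x ∧ x ∈ T}
              ⊆ {x : V | x ∈ S ∧ G.Adj u x ∧ x ∈ T} := by
            intro x hx
            rcases Set.mem_insert_iff.mp hx with rfl | hx'
            · exact ⟨hvS, hadj.symm, hvT⟩
            · exact ⟨Finset.mem_of_mem_erase hx'.1, hx'.2⟩
          have h2 := Set.ncard_le_ncard hins (Set.toFinite _)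
          rw [Set.ncard_insert_of_notMem
            (fun hmem => (Finset.notMem_erase v S) hmem.1) (Set.toFinite _)] at h2
          have h3 : t u - 1 ≤ {x : V | x ∈ S.erase v ∧ G.Adj u x ∧ x ∈ T}.ncard := by
            simpa [ht', if_pos hadj] using hcnt
          omega
        · have hmono : {x : V | x ∈ S.erase v ∧ G.Adj u x ∧ x ∈ T}.ncard
              ≤ {x : V | x ∈ S ∧ G.Adj u x ∧ x ∈ T}.ncard :=
            Set.ncard_le_ncard (fun x hx => ⟨Finset.mem_of_mem_erase hx.1, hx.2⟩)
              (Set.toFinite _)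
          refine hcl u huS (le_trans ?_ hmono)
          simpa [ht', if_neg hadj] using hcnt
      have hterm : ∑ u ∈ S.erase v,
            min 1 ((t' u : ℝ) / ((((S.erase v).filter (G.Adj u)).card : ℝ) + 1))
          ≤ ∑ u ∈ S.erase v,
            min 1 ((t u : ℝ) / (((S.filter (G.Adj u)).card : ℝ) + 1)) := by
        refine Finset.sum_le_sum fun u hu => ?_
        rw [Finset.filter_erase]
        by_cases hadj : G.Adj v u
        · have hvmem : v ∈ S.filter (G.Adj u) := Finset.mem_filter.mpr ⟨hvS, hadj.symm⟩
          rw [Finset.card_erase_of_mem hvmem]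
          have he : t' u = t u - 1 := if_pos hadj
          rw [he]
          exact aux_L1 (t u) _ (Finset.card_pos.mpr ⟨v, hvmem⟩)
        · have hnm : v ∉ S.filter (G.Adj u) :=
            fun hmem => hadj ((Finset.mem_filter.mp hmem).2.symm)
          rw [Finset.erase_eq_of_notMem hnm]
          have he : t' u = t u := if_neg hadj
          rw [he]
      have hnonneg : ∀ u ∈ S, (0:ℝ) ≤ min 1 ((t u : ℝ) / (((S.filter (G.Adj u)).card : ℝ) + 1)) :=
        fun u _ => le_min zero_le_one (by positivity)
      rcases Nat.eq_zero_or_pos (t v) with h0 | h1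
      · refine ⟨A, ?_, ?_⟩
        · intro T hAT hcl
          exact key T hAT hcl (hcl v hvS (h0 ▸ Nat.zero_le _))
        · refine (hbound.trans hterm).trans ?_
          exact Finset.sum_le_sum_of_subset_of_nonneg (Finset.erase_subset v S)
            (fun u hu _ => hnonneg u hu)
      · have hdv : (S.filter (G.Adj v)).card < t v := hv h1
        refine ⟨insert v A, ?_, ?_⟩
        · intro T hAT hcl
          refine key T ?_ hcl (hAT (by simp))
          intro x hx
          exact hAT (by simpa using Or.inr hx)
        · have h1' : min 1 ((t v : ℝ) / (((S.filter (G.Adj v)).card : ℝ) + 1)) = 1 := by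
            refine min_eq_left ?_
            rw [le_div_iff₀ (by positivity)]
            have hle : ((S.filter (G.Adj v)).card : ℝ) + 1 ≤ (t v : ℝ) := by
              exact_mod_cast hdv
            linarith
          calc ((insert v A).card : ℝ) ≤ (A.card : ℝ) + 1 := by
                exact_mod_cast Finset.card_insert_le v A
            _ ≤ ∑ u ∈ S.erase v, min 1 ((t u : ℝ) / (((S.filter (G.Adj u)).card : ℝ) + 1)) + 1 :=
                add_le_add_left (hbound.trans hterm) 1
            _ = ∑ u ∈ S.erase v, min 1 ((t u : ℝ) / (((S.filter (G.Adj u)).card : ℝ) + 1))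
                + min 1 ((t v : ℝ) / (((S.filter (G.Adj v)).card : ℝ) + 1)) := by rw [h1']
            _ = ∑ u ∈ S, min 1 ((t u : ℝ) / (((S.filter (G.Adj u)).card : ℝ) + 1)) :=
                Finset.sum_erase_add S _ hvS

theorem stmt_0 {V : Type*} [Fintype V] [DecidableEq V] (G : SimpleGraph V)
    [DecidableRel G.Adj] (k : ℕ) (hk : 0 < k) :
    ∃ A : Finset V, Contagious G k ↑A ∧
      (A.card : ℝ) ≤ ∑ v : V, min 1 ((k : ℝ) / (G.degree v + 1)) := by
  obtain ⟨A, hgood, hbound⟩ :=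
    aux_main G (Fintype.card V) Finset.univ (by rw [Finset.card_univ]) (fun _ => k)
  refine ⟨A, ?_, ?_⟩
  · intro T hAT hcl w
    refine hgood T hAT ?_ w (Finset.mem_univ w)
    intro u _ hcnt
    apply hcl u
    have hset : {x : V | x ∈ (Finset.univ : Finset V) ∧ G.Adj u x ∧ x ∈ T}
        = {x : V | G.Adj u x ∧ x ∈ T} := by
      ext x; simp
    rwa [hset] at hcnt
  · have he : ∑ v : V, min 1 ((k : ℝ) / ((G.degree v : ℝ) + 1))
        = ∑ v ∈ Finset.univ, min 1 ((k : ℝ) / (((Finset.univ.filter (G.Adj v)).card : ℝ) + 1)) := by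
      refine Finset.sum_congr rfl fun v _ => ?_
      have : Finset.univ.filter (G.Adj v) = G.neighborFinset v := by
        ext x; simp
      rw [this, SimpleGraph.card_neighborFinset_eq_degree]
    rw [he]
    exact hbound
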